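/- For every natural number k ≥ 1, B_k = 1 + ∑_{j=0}^{k-1} (2^{k-j} - 1)·C(k,j)·B_j. -/

import Mathlib

/-- The sequence `B` with `B_0 = 1` and
`B_p = 2·∑_{j=0}^{⌊p/2⌋} C(p,2j+1)·B_{p-2j-1}` for `p > 0`. -/
def B : ℕ → ℤ
  | 0 => 1
  | p + 1 => 2 * ∑ j ∈ Finset.range ((p + 1) / 2 + 1),
      (((p + 1).choose (2 * j + 1) : ℤ)) * B (p - 2 * j)
  decreasing_by exact Nat.lt_succ_of_le (Nat.sub_le p (2 * j))

lemma sum_odd (f : ℕ → ℤ) : ∀ n, ∑ i ∈ Finset.range (2*n), (1 - (-1:ℤ)^i) * f i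
    = 2 * ∑ j ∈ Finset.range n, f (2*j+1) := by
  intro n
  induction n with
  | zero => simp
  | succ n ih =>
    have h : 2*(n+1) = (2*n+1)+1 := by ring
    rw [h, Finset.sum_range_succ, Finset.sum_range_succ, Finset.sum_range_succ, ih]
    have h1 : (-1:ℤ)^(2*n) = 1 := by rw [pow_mul]; norm_num
    have h2 : (-1:ℤ)^(2*n+1) = -1 := by rw [pow_succ, h1]; norm_num
    rw [h1, h2]; ring

lemma odd_sum (p : ℕ) :
    ∑ i ∈ Finset.range (p+2), (1 - (-1:ℤ)^i) * ((p+1).choose i : ℤ) * B (p+1-i)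
    = 2 * ∑ j ∈ Finset.range ((p+1)/2 + 1), ((p+1).choose (2*j+1) : ℤ) * B (p - 2*j) := by
  have key : ∀ m, ∑ i ∈ Finset.range (2*m), (1 - (-1:ℤ)^i) * ((p+1).choose i : ℤ) * B (p+1-i)
      = 2 * ∑ j ∈ Finset.range m, ((p+1).choose (2*j+1) : ℤ) * B (p - 2*j) := by
    intro m
    have := sum_odd (fun i => ((p+1).choose i : ℤ) * B (p+1-i)) m
    simp only [mul_assoc] at this ⊢
    rw [this]
    congr 1
    refine Finset.sum_congr rfl fun j _ => ?_
    congr 2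
    omega
  rcases Nat.even_or_odd p with ⟨t, ht⟩ | ⟨t, ht⟩
  · -- p = 2t, p+2 = 2*(t+1), (p+1)/2+1 = t+1
    have h1 : p + 2 = 2*(t+1) := by omega
    have h2 : (p+1)/2 + 1 = t+1 := by omega
    rw [h1, h2, key]
  · -- p = 2t+1, p+2 = 2*(t+1)+1, (p+1)/2+1 = t+2
    have h1 : p + 2 = 2*(t+1)+1 := by omega
    have h2 : (p+1)/2 + 1 = (t+1)+1 := by omega
    rw [h1, h2, Finset.sum_range_succ, Finset.sum_range_succ, key]
    have hz : ((p+1).choose (2*(t+1)+1) : ℤ) = 0 := by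
      norm_cast
      exact Nat.choose_eq_zero_of_lt (by omega)
    have hz2 : (1 - (-1:ℤ)^(2*(t+1))) = 0 := by
      rw [pow_mul]; norm_num
    rw [hz, hz2]; ring

lemma B_rec (p : ℕ) : B p = (if p = 0 then (1:ℤ) else 0)
    + ∑ i ∈ Finset.range (p+1), (1 - (-1:ℤ)^i) * (p.choose i : ℤ) * B (p - i) := by
  cases p with
  | zero => simp [B]
  | succ p =>
    rw [B, if_neg (Nat.succ_ne_zero p), zero_add, ← odd_sum]

lemma alt_sum (n : ℕ) : ∑ i ∈ Finset.range (n+1), (1 - (-1:ℤ)^i) * (n.choose i : ℤ)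
    = 2^n - (if n = 0 then 1 else 0) := by
  have h1 : ∑ i ∈ Finset.range (n+1), ((n.choose i : ℤ)) = 2^n := by
    exact_mod_cast Nat.sum_range_choose n
  have h2 := Int.alternating_sum_range_choose (n := n)
  calc ∑ i ∈ Finset.range (n+1), (1 - (-1:ℤ)^i) * (n.choose i : ℤ)
      = ∑ i ∈ Finset.range (n+1), ((n.choose i : ℤ) - (-1:ℤ)^i * (n.choose i : ℤ)) := by
        refine Finset.sum_congr rfl fun i _ => by ring
    _ = 2^n - (if n = 0 then 1 else 0) := by
        rw [Finset.sum_sub_distrib, h1, h2]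

/-- **Hoggatt's formula.** For every `k ≥ 1`,
`B_k = 1 + ∑_{j=0}^{k-1} (2^(k-j) - 1)·C(k,j)·B_j`. -/
theorem B_hoggatt (k : ℕ) (hk : 1 ≤ k) :
    B k = 1 + ∑ j ∈ Finset.range k, ((2 : ℤ) ^ (k - j) - 1) * (k.choose j : ℤ) * B j := by
  have hT : ∑ j ∈ Finset.range (k+1), (k.choose j : ℤ) * B j
      = 1 + ∑ m ∈ Finset.range (k+1), (k.choose m : ℤ) * B m * (2^(k-m))
        - B k := by
    calc ∑ j ∈ Finset.range (k+1), (k.choose j : ℤ) * B j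
        = ∑ j ∈ Finset.range (k+1), (k.choose j : ℤ) *
            ((if j = 0 then (1:ℤ) else 0)
              + ∑ i ∈ Finset.range (j+1), (1 - (-1:ℤ)^i) * (j.choose i : ℤ) * B (j - i)) := by
          refine Finset.sum_congr rfl fun j _ => by rw [← B_rec]
      _ = (∑ j ∈ Finset.range (k+1), (k.choose j : ℤ) * (if j = 0 then (1:ℤ) else 0))
          + ∑ j ∈ Finset.range (k+1), ∑ i ∈ Finset.range (j+1),
              (k.choose j : ℤ) * ((1 - (-1:ℤ)^i) * (j.choose i : ℤ) * B (j - i)) := by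
          rw [← Finset.sum_add_distrib]
          refine Finset.sum_congr rfl fun j _ => by rw [mul_add, Finset.mul_sum]
      _ = 1 + ∑ j ∈ Finset.range (k+1), ∑ m ∈ Finset.range (j+1),
              (k.choose j : ℤ) * ((1 - (-1:ℤ)^(j-m)) * (j.choose m : ℤ) * B m) := by
          congr 1
          · simp
          · refine Finset.sum_congr rfl fun j _ => ?_
            rw [← Finset.sum_range_reflect]
            refine Finset.sum_congr rfl fun m hm => ?_
            rw [Finset.mem_range] at hm
            have hmj : m ≤ j := by omega
            have e1 : j + 1 - 1 - m = j - m := by omega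
            have e2 : j - (j - m) = m := by omega
            rw [e1, e2, Nat.choose_symm hmj]
      _ = 1 + ∑ m ∈ Finset.range (k+1), ∑ j ∈ Finset.Ico m (k+1),
              (k.choose j : ℤ) * ((1 - (-1:ℤ)^(j-m)) * (j.choose m : ℤ) * B m) := by
          congr 1
          simp only [Finset.range_eq_Ico]; rw [← Finset.sum_Ico_Ico_comm]
      _ = 1 + ∑ m ∈ Finset.range (k+1),
              (k.choose m : ℤ) * B m * (2^(k-m) - (if k - m = 0 then 1 else 0)) := by
          congr 1
          refine Finset.sum_congr rfl fun m hm => ?_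
          rw [Finset.mem_range] at hm
          have hmk : m ≤ k := by omega
          rw [Finset.sum_Ico_eq_sum_range]
          have hr : k + 1 - m = (k - m) + 1 := by omega
          rw [hr]
          have step : ∀ i ∈ Finset.range ((k-m)+1),
              (k.choose (m+i) : ℤ) * ((1 - (-1:ℤ)^((m+i)-m)) * ((m+i).choose m : ℤ) * B m)
              = (k.choose m : ℤ) * B m * ((1 - (-1:ℤ)^i) * ((k-m).choose i : ℤ)) := by
            intro i hi
            rw [Finset.mem_range] at hi
            have h1 : m + i - m = i := by omega
            have h2 : k.choose (m+i) * (m+i).choose m = k.choose m * (k-m).choose i := by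
              have := Nat.choose_mul (n := k) (k := m+i) (s := m) (by omega)
              rwa [h1] at this
            have h2' : (k.choose (m+i) : ℤ) * ((m+i).choose m : ℤ)
                = (k.choose m : ℤ) * ((k-m).choose i : ℤ) := by exact_mod_cast h2
            rw [h1]
            linear_combination ((1 - (-1:ℤ)^i) * B m) * h2'
          rw [Finset.sum_congr rfl step, ← Finset.mul_sum, alt_sum]
      _ = 1 + ∑ m ∈ Finset.range (k+1), (k.choose m : ℤ) * B m * (2^(k-m)) - B k := by
          have hsplit : ∑ m ∈ Finset.range (k+1),
              (k.choose m : ℤ) * B m * (2^(k-m) - (if k - m = 0 then 1 else 0))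
              = ∑ m ∈ Finset.range (k+1), (k.choose m : ℤ) * B m * (2^(k-m))
                - ∑ m ∈ Finset.range (k+1), (if m = k then (k.choose m : ℤ) * B m else 0) := by
            rw [← Finset.sum_sub_distrib]
            refine Finset.sum_congr rfl fun m hm => ?_
            rw [Finset.mem_range] at hm
            by_cases h : m = k
            · subst h
              simp
            · have h0 : ¬ (k - m = 0) := by omega
              rw [if_neg h0, if_neg h]
              ring
          rw [hsplit, Finset.sum_ite_eq' (Finset.range (k+1)) k]
          rw [if_pos (Finset.self_mem_range_succ k), Nat.choose_self]
          push_cast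
          ring
  -- now conclude
  have hT' : B k = 1 + ∑ m ∈ Finset.range (k+1), (k.choose m : ℤ) * B m * (2^(k-m) - 1) := by
    have : ∑ m ∈ Finset.range (k+1), (k.choose m : ℤ) * B m * (2^(k-m) - 1)
        = ∑ m ∈ Finset.range (k+1), (k.choose m : ℤ) * B m * (2^(k-m))
          - ∑ m ∈ Finset.range (k+1), (k.choose m : ℤ) * B m := by
      rw [← Finset.sum_sub_distrib]
      exact Finset.sum_congr rfl fun m _ => by ring
    rw [this]
    linarith [hT]
  rw [hT', Finset.sum_range_succ]
  simp only [Nat.sub_self, pow_zero, sub_self, mul_zero, add_zero]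
  congr 1
  refine Finset.sum_congr rfl fun m _ => by ring
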